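/- Let A be an n×n symmetric irreducible matrix whose comparison matrix Ā is positive semidefinite. Then the kernel of Ā has dimension at most one; moreover, if the kernel has dimension one, there exists a strictly positive vector f > 0 such that every vector in ker(Ā) is a scalar multiple of f. -/

import Mathlib

open Matrix

/-- The comparison matrix of a square matrix. -/
def comparisonMatrix {n : Type*} [DecidableEq n] (M : Matrix n n ℝ) : Matrix n n ℝ :=
  fun i j => if i = j then M i i else -|M i j|

/-- A matrix is irreducible iff any two distinct indices are connected by a chain
of nonzero entries. -/
def MatrixIrreducible {n : Type*} (A : Matrix n n ℝ) : Prop :=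
  ∀ i j : n, i ≠ j → Relation.TransGen (fun a b => A a b ≠ 0) i j

section aux
variable {n : ℕ} (A : Matrix (Fin n) (Fin n) ℝ)

lemma abs_ker (hcmp : (comparisonMatrix A).PosSemidef) (x : Fin n → ℝ)
    (hx : (comparisonMatrix A).mulVec x = 0) :
    (comparisonMatrix A).mulVec (fun i => |x i|) = 0 := by
  set B := comparisonMatrix A with hB
  set y : Fin n → ℝ := fun i => |x i| with hy
  have key : y ⬝ᵥ B *ᵥ y ≤ x ⬝ᵥ B *ᵥ x := by
    simp only [dotProduct, mulVec, Finset.mul_sum]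
    refine Finset.sum_le_sum fun i _ => Finset.sum_le_sum fun j _ => ?_
    by_cases h : i = j
    · subst h
      have hBd : B i i = A i i := by simp [hB, comparisonMatrix]
      rw [hBd]
      calc y i * (A i i * y i) = A i i * (|x i| * |x i|) := by rw [mul_left_comm]
        _ = A i i * (x i * x i) := by rw [abs_mul_abs_self]
        _ = x i * (A i i * x i) := by rw [mul_left_comm]
        _ ≤ x i * (A i i * x i) := le_rfl
    · have : B i j = -|A i j| := by simp [hB, comparisonMatrix, h]
      rw [this]
      have h1 : x i * x j ≤ |x i| * |x j| := by
        calc x i * x j ≤ |x i * x j| := le_abs_self _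
        _ = |x i| * |x j| := abs_mul _ _
      nlinarith [abs_nonneg (A i j)]
  have h0 : x ⬝ᵥ B *ᵥ x = 0 := by rw [hx, dotProduct_zero]
  have hnn : 0 ≤ y ⬝ᵥ B *ᵥ y := by simpa using hcmp.dotProduct_mulVec_nonneg y
  have : y ⬝ᵥ B *ᵥ y = 0 := le_antisymm (h0 ▸ key) hnn
  have := (hcmp.dotProduct_mulVec_zero_iff y).mp (by simpa using this)
  exact this

lemma prop_zero (f : Fin n → ℝ) (hf : (comparisonMatrix A).mulVec f = 0)
    (hnn : ∀ i, 0 ≤ f i) {b k : Fin n} (hb : f b = 0) (hA : A b k ≠ 0) : f k = 0 := by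
  by_cases hbk : b = k
  · exact hbk ▸ hb
  have hrow : ∑ j, comparisonMatrix A b j * f j = 0 := by
    have := congrFun hf b
    simpa [mulVec, dotProduct] using this
  have hterm : ∀ j ∈ Finset.univ, j ≠ b → comparisonMatrix A b j * f j ≤ 0 := by
    intro j _ hj
    have : comparisonMatrix A b j = -|A b j| := by simp [comparisonMatrix, (Ne.symm hj)]
    rw [this]
    have := hnn j
    nlinarith [abs_nonneg (A b j)]
  have hsum0 : ∑ j ∈ Finset.univ \ {b}, comparisonMatrix A b j * f j = 0 := by
    rw [Finset.sum_eq_sum_sdiff_singleton_add (Finset.mem_univ b)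
      (fun j => comparisonMatrix A b j * f j), hb, mul_zero, add_zero] at hrow
    exact hrow
  have heach := (Finset.sum_eq_zero_iff_of_nonpos (fun j hj => hterm j (Finset.mem_sdiff.mp hj).1
      (by simpa using (Finset.mem_sdiff.mp hj).2))).mp hsum0
  have hk := heach k (by simp [Ne.symm hbk])
  have : comparisonMatrix A b k = -|A b k| := by simp [comparisonMatrix, hbk]
  rw [this] at hk
  have hne : |A b k| ≠ 0 := fun h => hA (abs_eq_zero.mp h)
  have h2 : |A b k| * f k = 0 := by linarith
  rcases mul_eq_zero.mp h2 with h | h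
  · exact absurd h hne
  · exact h

lemma ker_pos (hsym : A.IsSymm)
    (hirr : ∀ i j : Fin n, i ≠ j → Relation.TransGen (fun a b => A a b ≠ 0) i j)
    (f : Fin n → ℝ) (hf : (comparisonMatrix A).mulVec f = 0)
    (hnn : ∀ i, 0 ≤ f i) (hne : f ≠ 0) : ∀ i, 0 < f i := by
  intro i
  rcases (hnn i).lt_or_eq with h | h
  · exact h
  exfalso
  obtain ⟨j, hj⟩ := Function.ne_iff.mp hne
  simp only [Pi.zero_apply] at hj
  have hij : i ≠ j := fun he => hj (by rw [← he, ← h])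
  -- propagate zero from i along chain to j
  have : f j = 0 := by
    have chain := hirr i j hij
    have base : f i = 0 := h.symm
    clear hij hj
    induction chain with
    | single hab => exact prop_zero A f hf hnn base hab
    | tail _ hbc ih => exact prop_zero A f hf hnn ih hbc
  exact hj this

lemma ker_multiple (hsym : A.IsSymm)
    (hirr : ∀ i j : Fin n, i ≠ j → Relation.TransGen (fun a b => A a b ≠ 0) i j)
    (hcmp : (comparisonMatrix A).PosSemidef)
    (f : Fin n → ℝ) (hf : (comparisonMatrix A).mulVec f = 0)
    (hpos : ∀ i, 0 < f i)
    (y : Fin n → ℝ) (hy : (comparisonMatrix A).mulVec y = 0) :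
    ∃ c : ℝ, y = c • f := by
  rcases Nat.eq_zero_or_pos n with hn | hn
  · exact ⟨0, by subst hn; ext i; exact absurd i.2 (by simp)⟩
  set i0 : Fin n := ⟨0, hn⟩
  set c := y i0 / f i0 with hc
  refine ⟨c, ?_⟩
  set z : Fin n → ℝ := y - c • f with hz
  have hzker : (comparisonMatrix A).mulVec z = 0 := by
    simp [hz, mulVec_sub, mulVec_smul, hf, hy]
  have hz0 : z i0 = 0 := by
    simp only [hz, hc, Pi.sub_apply, Pi.smul_apply, smul_eq_mul]
    rw [div_mul_eq_mul_div, mul_div_assoc, div_self (hpos i0).ne', mul_one, sub_self]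
  by_cases hzz : z = 0
  · have := hzz
    rw [hz] at this
    have : y = c • f := by
      have := sub_eq_zero.mp this
      exact this
    exact this
  · exfalso
    have habs := abs_ker A hcmp z hzker
    have habsne : (fun i => |z i|) ≠ 0 := by
      intro h
      apply hzz
      ext i
      have := congrFun h i
      simpa using abs_eq_zero.mp this
    have := ker_pos A hsym hirr (fun i => |z i|) habs (fun i => abs_nonneg _) habsne i0
    rw [hz0] at this
    simp at this
end aux

theorem kernel_comparison_dim_le_one'
    {n : ℕ} (A : Matrix (Fin n) (Fin n) ℝ) (hsym : A.IsSymm)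
    (hirr : ∀ i j : Fin n, i ≠ j → Relation.TransGen (fun a b => A a b ≠ 0) i j)
    (hcmp : (comparisonMatrix A).PosSemidef) :
    Module.finrank ℝ (LinearMap.ker (comparisonMatrix A).mulVecLin) ≤ 1 ∧
      (Module.finrank ℝ (LinearMap.ker (comparisonMatrix A).mulVecLin) = 1 →
        ∃ f : Fin n → ℝ, (∀ i, 0 < f i) ∧
          ∀ x : Fin n → ℝ, (comparisonMatrix A).mulVec x = 0 → ∃ c : ℝ, x = c • f) := by
  by_cases hker : ∀ x : Fin n → ℝ, (comparisonMatrix A).mulVec x = 0 → x = 0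
  · have hbot : LinearMap.ker (comparisonMatrix A).mulVecLin = ⊥ := by
      rw [LinearMap.ker_eq_bot']
      intro x hx
      exact hker x (by simpa [Matrix.mulVecLin_apply] using hx)
    rw [hbot]
    simp only [finrank_bot]
    exact ⟨by norm_num, by norm_num⟩
  · push_neg at hker
    obtain ⟨x, hx, hxne⟩ := hker
    set f : Fin n → ℝ := fun i => |x i| with hfdef
    have hfker := abs_ker A hcmp x hx
    have hfne : f ≠ 0 := by
      intro h
      apply hxne
      ext i
      have := congrFun h i
      simpa using abs_eq_zero.mp this
    have hfpos := ker_pos A hsym hirr f hfker (fun i => abs_nonneg _) hfne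
    have hmul : ∀ y : Fin n → ℝ, (comparisonMatrix A).mulVec y = 0 → ∃ c : ℝ, y = c • f :=
      fun y hy => ker_multiple A hsym hirr hcmp f hfker hfpos y hy
    have hfmem : f ∈ LinearMap.ker (comparisonMatrix A).mulVecLin := by
      simpa [LinearMap.mem_ker, Matrix.mulVecLin_apply] using hfker
    refine ⟨?_, fun _ => ⟨f, hfpos, hmul⟩⟩
    apply finrank_le_one (⟨f, hfmem⟩ : LinearMap.ker (comparisonMatrix A).mulVecLin)
    intro w
    have hw : (comparisonMatrix A).mulVec w.1 = 0 := by
      have := w.2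
      rwa [LinearMap.mem_ker, Matrix.mulVecLin_apply] at this
    obtain ⟨c, hc⟩ := hmul w.1 hw
    refine ⟨c, Subtype.ext ?_⟩
    simp [hc]

theorem kernel_comparison_dim_le_one
    {n : ℕ} (A : Matrix (Fin n) (Fin n) ℝ) (hsym : A.IsSymm)
    (hirr : MatrixIrreducible A)
    (hcmp : (comparisonMatrix A).PosSemidef) :
    Module.finrank ℝ (LinearMap.ker (comparisonMatrix A).mulVecLin) ≤ 1 ∧
      (Module.finrank ℝ (LinearMap.ker (comparisonMatrix A).mulVecLin) = 1 →
        ∃ f : Fin n → ℝ, (∀ i, 0 < f i) ∧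
          ∀ x : Fin n → ℝ, (comparisonMatrix A).mulVec x = 0 → ∃ c : ℝ, x = c • f) := by
  exact kernel_comparison_dim_le_one' A hsym hirr hcmp
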